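/- If N_F > 1 and N_M > 1, then the pair (M*, F*) with M* = (N_M/(N_F+N_M))·(1/β)·ln N_F and F* = (N_F/(N_F+N_M))·(1/β)·ln N_F is the unique positive solution of the equilibrium equations r·ρ·F·e^{-β(M+F)} = μ_M·M and (1-r)·ρ·e^{-β(M+F)} = μ_F, where N_F = (1-r)ρ/μ_F and N_M = rρ/μ_M. -/

import Mathlib

open Real

theorem unique_positive_equilibrium
    (r ρ β μM μF : ℝ) (hr : r ∈ Set.Ioo (0:ℝ) 1) (hρ : 0 < ρ) (hβ : 0 < β)
    (hμM : 0 < μM) (hμF : 0 < μF)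
    (NF NM : ℝ) (hNF : NF = (1 - r) * ρ / μF) (hNM : NM = r * ρ / μM)
    (hNF1 : 1 < NF) (hNM1 : 1 < NM) :
    ∀ M F : ℝ, 0 < M → 0 < F →
      ((r * ρ * F * Real.exp (-β * (M + F)) = μM * M ∧
        (1 - r) * ρ * Real.exp (-β * (M + F)) = μF) ↔
       (M = NM / (NF + NM) * (1 / β) * Real.log NF ∧
        F = NF / (NF + NM) * (1 / β) * Real.log NF)) := by
  intro M F hM hF
  have h1r : 0 < 1 - r := by linarith [hr.2]
  have hNFpos : (0:ℝ) < NF := lt_trans one_pos hNF1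
  have hNMpos : (0:ℝ) < NM := lt_trans one_pos hNM1
  have hsum : (0:ℝ) < NF + NM := by linarith
  have hrρ : r * ρ = NM * μM := by
    rw [hNM]; field_simp
  have h1rρ : (1 - r) * ρ = NF * μF := by
    rw [hNF]; field_simp
  constructor
  · rintro ⟨e1, e2⟩
    have hE : Real.exp (-β * (M + F)) = 1 / NF := by
      rw [h1rρ] at e2
      rw [eq_div_iff (ne_of_gt hNFpos)]
      have h3 : (Real.exp (-β * (M + F)) * NF) * μF = 1 * μF := by
        linear_combination e2
      exact mul_right_cancel₀ (ne_of_gt hμF) h3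
    have hMF : M + F = Real.log NF / β := by
      have := congrArg Real.log hE
      rw [Real.log_exp, one_div, Real.log_inv] at this
      field_simp at this ⊢
      linarith
    rw [hE, hrρ] at e1
    -- e1 : NM * μM * F * (1/NF) = μM * M
    have hMN : M * NF = NM * F := by
      have h4 : (M * NF) * μM = (NM * F) * μM := by
        have hNFne : NF ≠ 0 := ne_of_gt hNFpos
        field_simp at e1
        linear_combination (-μM) * e1
      exact mul_right_cancel₀ (ne_of_gt hμM) h4
    have hMF' : (M + F) * β = Real.log NF := by
      rw [hMF, div_mul_cancel₀ _ (ne_of_gt hβ)]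
    constructor
    · field_simp
      linear_combination β * hMN + NM * hMF'
    · field_simp
      linear_combination (-β) * hMN + NF * hMF'
  · rintro ⟨hMe, hFe⟩
    have hMF : M + F = Real.log NF / β := by
      rw [hMe, hFe]
      field_simp
      ring
    have hE : Real.exp (-β * (M + F)) = 1 / NF := by
      rw [hMF]
      rw [show -β * (Real.log NF / β) = -Real.log NF by field_simp]
      rw [Real.exp_neg, Real.exp_log hNFpos, one_div]
    rw [hE]
    constructor
    · rw [hrρ, hMe, hFe]
      field_simp
    · rw [h1rρ]
      field_simp
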